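/- arXiv:1011.4016 — 3 statements merged into one kernel-verified Lean document; each statement's English description precedes it below -/
import Mathlib

section
/- A formula φ(x̄, ȳ) has the independence property with respect to a class C if and only if the opposite formula φ^opp(ȳ, x̄) (the same formula with the roles of the two variable tuples exchanged) has the independence property with respect to C. -/
open FirstOrder

lemma ip_swap {ι : Type} {A B : ι → Type} (r : ∀ k, A k → B k → Prop)
    (h : ∀ n : ℕ, ∃ (k : ι) (a : Fin n → A k) (b : Set (Fin n) → B k),
        ∀ (i : Fin n) (J : Set (Fin n)), r k (a i) (b J) ↔ i ∈ J) :
    ∀ n : ℕ, ∃ (k : ι) (a : Fin n → B k) (b : Set (Fin n) → A k),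
        ∀ (i : Fin n) (J : Set (Fin n)), r k (b J) (a i) ↔ i ∈ J := by
  intro n
  obtain ⟨N, ⟨e⟩⟩ := Finite.exists_equiv_fin (Set (Fin n))
  obtain ⟨k, a, b, hab⟩ := h N
  refine ⟨k, fun i => b {s | i ∈ e.symm s}, fun J => a (e J), fun i J => ?_⟩
  rw [hab]
  simp [Set.mem_setOf_eq]

/-- A formula `φ(x̄, ȳ)` has the independence property with respect to a class of
structures iff the opposite formula `φ(ȳ, x̄)` (the same formula with the roles of
the two tuples of variables exchanged) has the independence property. -/
theorem independence_property_opposite {L : Language} {ι : Type} (M : ι → Type)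
    [∀ i, L.Structure (M i)] {p q : ℕ} (φ : L.Formula (Fin p ⊕ Fin q)) :
    (∀ n : ℕ, ∃ (k : ι) (a : Fin n → Fin p → M k) (b : Set (Fin n) → Fin q → M k),
        ∀ (i : Fin n) (J : Set (Fin n)), φ.Realize (Sum.elim (a i) (b J)) ↔ i ∈ J) ↔
    (∀ n : ℕ, ∃ (k : ι) (a : Fin n → Fin q → M k) (b : Set (Fin n) → Fin p → M k),
        ∀ (i : Fin n) (J : Set (Fin n)), φ.Realize (Sum.elim (b J) (a i)) ↔ i ∈ J) := by
  constructor
  · exact ip_swap (fun k (x : Fin p → M k) (y : Fin q → M k) => φ.Realize (Sum.elim x y))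
  · exact ip_swap (fun k (y : Fin q → M k) (x : Fin p → M k) => φ.Realize (Sum.elim x y))
end

section
/- Let C be a subgraph-closed class of graphs that is not superflat, witnessed by r such that every K_m^r is a subgraph of a member of C. Then for every m, the bipartite incidence graph A_m — with vertices a_0,…,a_{m-1}, vertices b_J for each J ⊆ {0,…,m-1}, and a path of length r+1 from a_i to b_J whenever i ∈ J (paths internally disjoint) — is isomorphic to a member of C. -/
/-- Index type for the edges of the complete graph `K m`. -/
def EdgeIdx (m : ℕ) := {p : Fin m × Fin m // p.1 < p.2}

/-- Auxiliary relation for the `r`-times subdivided `m`-clique. -/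
def subCliqueRel (m r : ℕ) :
    (Fin m ⊕ EdgeIdx m × Fin r) → (Fin m ⊕ EdgeIdx m × Fin r) → Prop
  | Sum.inl _, Sum.inl _ => r = 0
  | Sum.inl i, Sum.inr (e, k) =>
      (k.val = 0 ∧ e.val.1 = i) ∨ (k.val = r - 1 ∧ e.val.2 = i)
  | Sum.inr (e, k), Sum.inr (e', k') => e = e' ∧ k'.val = k.val + 1
  | _, _ => False

/-- `K_m^r`: the complete graph on `m` vertices with each edge subdivided exactly `r` times. -/
def subClique (m r : ℕ) : SimpleGraph (Fin m ⊕ EdgeIdx m × Fin r) :=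
  SimpleGraph.fromRel (subCliqueRel m r)


/-- `H` occurs as a (not necessarily induced) subgraph of `G`, up to isomorphism. -/
def SubgraphOf {α β : Type*} (H : SimpleGraph α) (G : SimpleGraph β) : Prop :=
  ∃ f : H →g G, Function.Injective f

/-- A graph together with its vertex type. -/
abbrev SigmaGraph := Σ V : Type, SimpleGraph V

/-- Index type for the paths of the graph `A_m`: pairs `(i, J)` with `i ∈ J`. -/
def AIdx (m : ℕ) := {p : Fin m × Set (Fin m) // p.1 ∈ p.2}

/-- Auxiliary relation for the graph `A_m` with subdivision parameter `r`:
vertices `a_i`, vertices `b_J` for `J ⊆ {0,…,m-1}`, and internally disjoint paths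
of length `r+1` joining `a_i` to `b_J` exactly when `i ∈ J`. -/
def AgraphRel (m r : ℕ) :
    (Fin m ⊕ Set (Fin m) ⊕ AIdx m × Fin r) →
    (Fin m ⊕ Set (Fin m) ⊕ AIdx m × Fin r) → Prop
  | Sum.inl i, Sum.inr (Sum.inl J) => r = 0 ∧ i ∈ J
  | Sum.inl i, Sum.inr (Sum.inr (e, k)) => e.val.1 = i ∧ k.val = 0
  | Sum.inr (Sum.inl J), Sum.inr (Sum.inr (e, k)) => e.val.2 = J ∧ k.val = r - 1
  | Sum.inr (Sum.inr (e, k)), Sum.inr (Sum.inr (e', k')) => e = e' ∧ k'.val = k.val + 1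
  | _, _ => False

/-- The incidence graph `A_m` (with each incidence path of length `r+1`). -/
def Agraph (m r : ℕ) : SimpleGraph (Fin m ⊕ Set (Fin m) ⊕ AIdx m × Fin r) :=
  SimpleGraph.fromRel (AgraphRel m r)

/-- `A_m` occurs as a subgraph of the subdivided clique `K_{m+2^m}^r`. -/
theorem Agraph_subgraph_subClique (m r : ℕ) :
    SubgraphOf (Agraph m r) (subClique (m + 2 ^ m) r) := by
  classical
  let σ : Set (Fin m) ≃ Fin (2 ^ m) :=
    Fintype.equivFinOfCardEq (by simp [Fintype.card_set])
  have hnat : Function.Injective (Fin.natAdd m : Fin (2 ^ m) → Fin (m + 2 ^ m)) :=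
    fun i j h => Fin.ext (Nat.add_left_cancel (congrArg Fin.val h))
  let ψ : AIdx m → EdgeIdx (m + 2 ^ m) := fun e =>
    ⟨(Fin.castAdd (2 ^ m) e.val.1, Fin.natAdd m (σ e.val.2)), by
      simp only [Fin.lt_def, Fin.coe_castAdd, Fin.coe_natAdd]
      exact lt_of_lt_of_le e.val.1.isLt (Nat.le_add_right m _)⟩
  have hψ : Function.Injective ψ := by
    intro e e' h
    have h1 : (Fin.castAdd (2 ^ m) e.val.1 : Fin (m + 2 ^ m)) = Fin.castAdd (2 ^ m) e'.val.1 :=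
      congrArg (fun x => x.val.1) h
    have h2 : (Fin.natAdd m (σ e.val.2) : Fin (m + 2 ^ m)) = Fin.natAdd m (σ e'.val.2) :=
      congrArg (fun x => x.val.2) h
    have h1' : e.val.1 = e'.val.1 := Fin.castAdd_injective _ _ h1
    have h2' : e.val.2 = e'.val.2 := σ.injective (hnat h2)
    exact Subtype.ext (Prod.ext h1' h2')
  let v : (Fin m ⊕ Set (Fin m) ⊕ AIdx m × Fin r) → (Fin (m + 2 ^ m) ⊕ EdgeIdx (m + 2 ^ m) × Fin r) :=
    fun x => match x with
    | Sum.inl i => Sum.inl (Fin.castAdd (2 ^ m) i)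
    | Sum.inr (Sum.inl J) => Sum.inl (Fin.natAdd m (σ J))
    | Sum.inr (Sum.inr (e, k)) => Sum.inr (ψ e, k)
  have hv : Function.Injective v := by
    rintro (i | J | ⟨e, k⟩) (i' | J' | ⟨e', k'⟩) h <;>
        simp only [v, Sum.inl.injEq, Sum.inr.injEq, Prod.mk.injEq, reduceCtorEq] at h
    · exact congrArg Sum.inl (Fin.castAdd_injective _ _ h)
    · exact absurd (congrArg Fin.val h) (by
        simp only [Fin.coe_castAdd, Fin.coe_natAdd]
        exact Nat.ne_of_lt (lt_of_lt_of_le i.isLt (Nat.le_add_right m _)))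
    · exact absurd (congrArg Fin.val h) (by
        simp only [Fin.coe_castAdd, Fin.coe_natAdd]
        exact Nat.ne_of_gt (lt_of_lt_of_le i'.isLt (Nat.le_add_right m _)))
    · exact congrArg (Sum.inr ∘ Sum.inl) (σ.injective (hnat h))
    · exact congrArg Sum.inr (congrArg Sum.inr (Prod.ext (hψ h.1) h.2))
  have key : ∀ a b, AgraphRel m r a b →
      subCliqueRel (m + 2 ^ m) r (v a) (v b) ∨ subCliqueRel (m + 2 ^ m) r (v b) (v a) := by
    rintro (i | J | ⟨e, k⟩) (i' | J' | ⟨e', k'⟩) h <;>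
        simp only [AgraphRel] at h
    · exact Or.inl h.1
    · exact Or.inl (Or.inl ⟨h.2, by simp only [ψ]; rw [h.1]⟩)
    · exact Or.inl (Or.inr ⟨h.2, by simp only [ψ]; rw [h.1]⟩)
    · exact Or.inl ⟨by rw [h.1], h.2⟩
  refine ⟨⟨v, ?_⟩, hv⟩
  intro a b hab
  rw [Agraph, SimpleGraph.fromRel_adj] at hab
  rw [subClique, SimpleGraph.fromRel_adj]
  refine ⟨fun h => hab.1 (hv h), ?_⟩
  rcases hab.2 with h | h
  · exact key a b h
  · exact (key b a h).symm

/-- If `C` is subgraph-closed and, for some `r`, every subdivided clique `K_m^r`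
occurs as a subgraph of a member of `C`, then every incidence graph `A_m` is
isomorphic to a member of `C`. -/
theorem Agraph_mem_of_not_superflat (C : Set SigmaGraph) (r : ℕ)
    (hclosed : ∀ H G : SigmaGraph, G ∈ C → SubgraphOf H.2 G.2 → H ∈ C)
    (hr : ∀ m : ℕ, ∃ G ∈ C, SubgraphOf (subClique m r) G.2) :
    ∀ m : ℕ, ∃ G ∈ C, Nonempty (Agraph m r ≃g G.2) := by
  intro m
  obtain ⟨G, hG, f, hf⟩ := hr (m + 2 ^ m)
  obtain ⟨g, hg⟩ := Agraph_subgraph_subClique m r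
  have : (⟨_, Agraph m r⟩ : SigmaGraph) ∈ C :=
    hclosed ⟨_, Agraph m r⟩ G hG ⟨f.comp g, hf.comp hg⟩
  exact ⟨⟨_, Agraph m r⟩, this, ⟨SimpleGraph.Iso.refl⟩⟩
end

section
/- Let C be a class of graphs and C' = {G' : G ∈ C} where G' subdivides each edge of G once and adds an apex t adjacent to all original vertices together with a triangle t, t₁, t₂. If C is superflat then C' is superflat. -/
/-- A graph together with its vertex type. -/
abbrev VGraph := Σ V : Type, SimpleGraph V

/-- For every `r` there is `m` such that `K_m^r` is not a subgraph of any member. -/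
def Superflat (C : Set VGraph) : Prop :=
  ∀ r : ℕ, ∃ m : ℕ, ∀ G ∈ C, ¬ SubgraphOf (subClique m r) G.2

/-- Auxiliary relation for the graph `G'`: each edge `{a,b}` of `G` is subdivided
once by a new vertex, and three new mutually adjacent vertices `t = 0`, `t₁ = 1`,
`t₂ = 2` are added, with `t` moreover adjacent to every original vertex of `G`. -/
def GprimeRel {α : Type} (G : SimpleGraph α) :
    (α ⊕ ({e : Sym2 α // e ∈ G.edgeSet} ⊕ Fin 3)) →
    (α ⊕ ({e : Sym2 α // e ∈ G.edgeSet} ⊕ Fin 3)) → Prop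
  | Sum.inl a, Sum.inr (Sum.inl e) => a ∈ e.val
  | Sum.inl _, Sum.inr (Sum.inr t) => t = 0
  | Sum.inr (Sum.inr _), Sum.inr (Sum.inr _) => True
  | _, _ => False

/-- The graph `G'` obtained from `G` by the diameter-reduction construction. -/
def Gprime {α : Type} (G : SimpleGraph α) :
    SimpleGraph (α ⊕ ({e : Sym2 α // e ∈ G.edgeSet} ⊕ Fin 3)) :=
  SimpleGraph.fromRel (GprimeRel G)

/-- `v` lies on a 3-cycle of the graph `H`. -/
def InTriangle {V : Type*} (H : SimpleGraph V) (v : V) : Prop :=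
  ∃ u w, H.Adj v u ∧ H.Adj v w ∧ H.Adj u w

section Lemmas
variable {α : Type} {G : SimpleGraph α}

lemma gp_not_adj_inl_inl (a b : α) : ¬ (Gprime G).Adj (.inl a) (.inl b) := by
  simp [Gprime, GprimeRel]

lemma gp_adj_edge {e} {x} (h : (Gprime G).Adj (.inr (.inl e)) x) :
    ∃ a, x = .inl a ∧ a ∈ e.val := by
  rcases x with a | e' | t
  · exact ⟨a, rfl, by simpa [Gprime, GprimeRel] using h⟩
  · simp [Gprime, GprimeRel] at h
  · simp [Gprime, GprimeRel] at h

lemma gp_adj_inl {a x} (h : (Gprime G).Adj (.inl a) x) :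
    (∃ e, x = .inr (.inl e) ∧ a ∈ e.val) ∨ x = .inr (.inr 0) := by
  rcases x with b | e | t
  · exact absurd h (gp_not_adj_inl_inl a b)
  · exact .inl ⟨e, rfl, by simpa [Gprime, GprimeRel] using h⟩
  · right
    simp only [Gprime, GprimeRel, SimpleGraph.fromRel_adj] at h
    simp [h.2.elim id (fun h => h.elim)]

lemma gp_adj_special {t x} (ht : t ≠ 0) (h : (Gprime G).Adj (.inr (.inr t)) x) :
    ∃ t', x = .inr (.inr t') := by
  rcases x with b | e | t'
  · exfalso
    simp only [Gprime, GprimeRel, SimpleGraph.fromRel_adj] at h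
    exact ht (h.2.elim (fun h => h.elim) id)
  · simp [Gprime, GprimeRel] at h
  · exact ⟨t', rfl⟩

lemma adj_of_mem_edge {e : {e : Sym2 α // e ∈ G.edgeSet}} {a b : α}
    (ha : a ∈ e.val) (hb : b ∈ e.val) (hab : a ≠ b) : G.Adj a b := by
  obtain ⟨ev, he⟩ := e
  induction ev using Sym2.ind with
  | _ x y =>
    simp only [Sym2.mem_iff] at ha hb
    simp only [SimpleGraph.mem_edgeSet] at he
    rcases ha with rfl | rfl <;> rcases hb with rfl | rfl
    · exact absurd rfl hab
    · exact he
    · exact he.symm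
    · exact absurd rfl hab
end Lemmas

section SC
variable {m r : ℕ}

lemma sc_adj_inl_inl (hr : r = 0) {i j : Fin m} (hij : i ≠ j) :
    (subClique m r).Adj (.inl i) (.inl j) := by
  refine ⟨by simpa using hij, ?_⟩
  left; exact hr

lemma sc_adj_inl_first (e : EdgeIdx m) (h0 : 0 < r) :
    (subClique m r).Adj (.inl e.val.1) (.inr (e, ⟨0, h0⟩)) := by
  exact ⟨by simp, .inl (.inl ⟨rfl, rfl⟩)⟩

lemma sc_adj_inl_last (e : EdgeIdx m) (h0 : 0 < r) :
    (subClique m r).Adj (.inl e.val.2) (.inr (e, ⟨r - 1, by omega⟩)) := by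
  exact ⟨by simp, .inl (.inr ⟨rfl, rfl⟩)⟩

lemma sc_adj_consec (e : EdgeIdx m) {k : ℕ} (h : k + 1 < r) :
    (subClique m r).Adj (.inr (e, ⟨k, by omega⟩)) (.inr (e, ⟨k + 1, h⟩)) := by
  refine ⟨by simp, .inl ⟨rfl, rfl⟩⟩

def nbr (r : ℕ) {m : ℕ} (i j : Fin m) (hij : j ≠ i) : Fin m ⊕ EdgeIdx m × Fin r :=
  if hr : r = 0 then .inl j
  else if h : i < j then .inr (⟨(i, j), h⟩, ⟨0, by omega⟩)
  else .inr (⟨(j, i), (hij.lt_or_gt.resolve_right h)⟩, ⟨r - 1, by omega⟩)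

lemma nbr_adj {i j : Fin m} (hij : j ≠ i) :
    (subClique m r).Adj (.inl i) (nbr r i j hij) := by
  unfold nbr
  split_ifs with hr h
  · exact sc_adj_inl_inl hr (Ne.symm hij)
  · exact ⟨by simp, .inl (.inl ⟨rfl, rfl⟩)⟩
  · exact ⟨by simp, .inl (.inr ⟨rfl, rfl⟩)⟩

lemma nbr_inj {i j j' : Fin m} (hij : j ≠ i) (hij' : j' ≠ i) (hjj : j ≠ j') :
    nbr r i j hij ≠ nbr r i j' hij' := by
  unfold nbr
  split_ifs with hr h h' h' <;>
    simp_all [EdgeIdx, Subtype.ext_iff, Prod.ext_iff]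
end SC


section Branch
variable {α : Type} {G : SimpleGraph α} {m r : ℕ}

lemma fin3_pigeonhole : ∀ t t1 t2 t3 : Fin 3, t1 ≠ t → t2 ≠ t → t3 ≠ t →
    t1 ≠ t2 → t1 ≠ t3 → t2 ≠ t3 → False := by decide

lemma sym2_pigeonhole {e : Sym2 α} {a1 a2 a3 : α} (h1 : a1 ∈ e) (h2 : a2 ∈ e)
    (h3 : a3 ∈ e) (h12 : a1 ≠ a2) (h13 : a1 ≠ a3) (h23 : a2 ≠ a3) : False := by
  induction e using Sym2.ind with
  | _ x y =>
    simp only [Sym2.mem_iff] at h1 h2 h3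
    rcases h1 with rfl | rfl <;> rcases h2 with rfl | rfl <;> rcases h3 with rfl | rfl <;>
      simp_all

lemma branch_image (hm : 4 ≤ m) (f : subClique m r →g Gprime G)
    (hf : Function.Injective f) (i : Fin m) :
    (∃ a, f (.inl i) = .inl a) ∨ f (.inl i) = .inr (.inr 0) := by
  obtain ⟨j1, j2, j3, hne1, hne2, hne3, h12, h13, h23⟩ :
      ∃ j1 j2 j3 : Fin m, j1 ≠ i ∧ j2 ≠ i ∧ j3 ≠ i ∧ j1 ≠ j2 ∧ j1 ≠ j3 ∧ j2 ≠ j3 := by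
    refine ⟨⟨if i.val = 0 then 1 else 0, by split <;> omega⟩,
      ⟨if i.val ≤ 1 then 2 else 1, by split <;> omega⟩,
      ⟨if i.val ≤ 2 then 3 else 2, by split <;> omega⟩, ?_, ?_, ?_, ?_, ?_, ?_⟩ <;>
      · intro h
        have := congrArg Fin.val h
        simp only at this
        split_ifs at this <;> omega
  -- neighbors
  set n1 := nbr r i j1 hne1
  set n2 := nbr r i j2 hne2
  set n3 := nbr r i j3 hne3
  have a1 := f.map_adj (nbr_adj hne1 (r := r))
  have a2 := f.map_adj (nbr_adj hne2 (r := r))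
  have a3 := f.map_adj (nbr_adj hne3 (r := r))
  have d12 : f n1 ≠ f n2 := fun h => nbr_inj hne1 hne2 h12 (hf h)
  have d13 : f n1 ≠ f n3 := fun h => nbr_inj hne1 hne3 h13 (hf h)
  have d23 : f n2 ≠ f n3 := fun h => nbr_inj hne2 hne3 h23 (hf h)
  rcases hx : f (.inl i) with a | e | t
  · exact .inl ⟨a, rfl⟩
  · exfalso
    rw [hx] at a1 a2 a3
    obtain ⟨b1, hb1, m1⟩ := gp_adj_edge a1
    obtain ⟨b2, hb2, m2⟩ := gp_adj_edge a2
    obtain ⟨b3, hb3, m3⟩ := gp_adj_edge a3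
    rw [hb1, hb2] at d12; rw [hb1, hb3] at d13; rw [hb2, hb3] at d23
    exact sym2_pigeonhole m1 m2 m3 (by simpa using d12) (by simpa using d13)
      (by simpa using d23)
  · rcases eq_or_ne t 0 with rfl | ht
    · exact .inr rfl
    exfalso
    rw [hx] at a1 a2 a3
    obtain ⟨t1, ht1⟩ := gp_adj_special ht a1
    obtain ⟨t2, ht2⟩ := gp_adj_special ht a2
    obtain ⟨t3, ht3⟩ := gp_adj_special ht a3
    have e1 : t1 ≠ t := by rintro rfl; exact a1.ne' ht1
    have e2 : t2 ≠ t := by rintro rfl; exact a2.ne' ht2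
    have e3 : t3 ≠ t := by rintro rfl; exact a3.ne' ht3
    rw [ht1, ht2] at d12; rw [ht1, ht3] at d13; rw [ht2, ht3] at d23
    exact fin3_pigeonhole t t1 t2 t3 e1 e2 e3 (by simpa using d12) (by simpa using d13)
      (by simpa using d23)
end Branch

section Parity
variable {α : Type} {G : SimpleGraph α} {m r : ℕ}

lemma parity (f : subClique m r →g Gprime G) (e : EdgeIdx m) (hr : 0 < r)
    (hgood : ∀ k : Fin r, ∀ t, f (.inr (e, k)) ≠ .inr (.inr t))
    {a : α} (ha : f (.inl e.val.1) = .inl a) :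
    ∀ n, ∀ h : n < r,
      (n % 2 = 0 → ∃ ε, f (.inr (e, ⟨n, h⟩)) = .inr (.inl ε)) ∧
      (n % 2 = 1 → ∃ c, f (.inr (e, ⟨n, h⟩)) = .inl c) := by
  intro n
  induction n with
  | zero =>
    intro h
    refine ⟨fun _ => ?_, fun h1 => by omega⟩
    have adj := f.map_adj (sc_adj_inl_first e hr)
    rw [ha] at adj
    rcases gp_adj_inl adj with ⟨ε, hε, _⟩ | hsp
    · exact ⟨ε, hε⟩
    · exact absurd hsp (hgood _ _)
  | succ n ih =>
    intro h
    have hn : n < r := by omega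
    have adj := f.map_adj (sc_adj_consec e (k := n) h)
    rcases Nat.even_or_odd n with he | ho
    · have he' : n % 2 = 0 := Nat.even_iff.mp he
      obtain ⟨ε, hε⟩ := (ih hn).1 he'
      rw [hε] at adj
      obtain ⟨c, hc, _⟩ := gp_adj_edge adj
      exact ⟨fun h0 => by omega, fun _ => ⟨c, hc⟩⟩
    · have ho' : n % 2 = 1 := Nat.odd_iff.mp ho
      obtain ⟨c, hc⟩ := (ih hn).2 ho'
      rw [hc] at adj
      refine ⟨fun _ => ?_, fun h1 => by omega⟩
      rcases gp_adj_inl adj with ⟨ε, hε, _⟩ | hsp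
      · exact ⟨ε, hε⟩
      · exact absurd hsp (hgood _ _)

lemma r_odd (f : subClique m r →g Gprime G) (e : EdgeIdx m) (hr : 0 < r)
    (hgood : ∀ k : Fin r, ∀ t, f (.inr (e, k)) ≠ .inr (.inr t))
    {a b : α} (ha : f (.inl e.val.1) = .inl a) (hb : f (.inl e.val.2) = .inl b) :
    r % 2 = 1 := by
  by_contra hodd
  have h0 : r % 2 = 0 := by omega
  have adj := f.map_adj (sc_adj_inl_last e hr)
  rw [hb] at adj
  have hlast : ∃ ε, f (.inr (e, ⟨r - 1, by omega⟩)) = .inr (.inl ε) := by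
    rcases gp_adj_inl adj with ⟨ε, hε, _⟩ | hsp
    · exact ⟨ε, hε⟩
    · exact absurd hsp (hgood _ _)
  obtain ⟨c, hc⟩ := (parity f e hr hgood ha (r - 1) (by omega)).2 (by omega)
  obtain ⟨ε, hε⟩ := hlast
  rw [hc] at hε
  simp at hε
end Parity

section Helpers
variable {α : Type} {G : SimpleGraph α} {m r : ℕ}

lemma gp_mem_of_adj {a : α} {ε} (h : (Gprime G).Adj (.inl a) (.inr (.inl ε))) :
    a ∈ ε.val := by
  rcases gp_adj_inl h with ⟨e, he, hm⟩ | hsp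
  · obtain rfl : ε = e := by simpa using he
    exact hm
  · simp at hsp

lemma build_adj (f : subClique m r →g Gprime G) (hf : Function.Injective f)
    {u v w} {c d : α} {ε} (hu : f u = .inl c) (hv : f v = .inl d)
    (hw : f w = .inr (.inl ε)) (auw : (subClique m r).Adj u w)
    (avw : (subClique m r).Adj v w) (huv : u ≠ v) : G.Adj c d := by
  have h1 := f.map_adj auw; rw [hu, hw] at h1
  have h2 := f.map_adj avw; rw [hv, hw] at h2
  exact adj_of_mem_edge (gp_mem_of_adj h1) (gp_mem_of_adj h2)
    (fun hcd => huv (hf (by rw [hu, hv, hcd])))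

lemma noK4 {x0 x1 x2 x3 : α ⊕ ({e : Sym2 α // e ∈ G.edgeSet} ⊕ Fin 3)}
    (h01 : (Gprime G).Adj x0 x1) (h02 : (Gprime G).Adj x0 x2)
    (h03 : (Gprime G).Adj x0 x3) (h12 : (Gprime G).Adj x1 x2)
    (h13 : (Gprime G).Adj x1 x3) (h23 : (Gprime G).Adj x2 x3) : False := by
  rcases x0 with a0 | e0 | t0 <;> rcases x1 with a1 | e1 | t1 <;>
    rcases x2 with a2 | e2 | t2 <;> rcases x3 with a3 | e3 | t3 <;>
    simp_all [Gprime, GprimeRel, SimpleGraph.fromRel_adj, Fin.ext_iff, -Fin.val_eq_zero_iff] <;>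
    omega
end Helpers

section Construct
variable {α : Type} {G : SimpleGraph α} {M m r s' : ℕ}

def liftEdge {M m : ℕ} (g : Fin M ↪o Fin m) (E : EdgeIdx M) : EdgeIdx m :=
  ⟨(g E.val.1, g E.val.2), g.strictMono E.property⟩

lemma liftEdge_inj (g : Fin M ↪o Fin m) : Function.Injective (liftEdge g) := by
  intro E E' h
  have hv := congrArg Subtype.val h
  unfold liftEdge at hv
  simp only [Prod.mk.injEq] at hv
  apply Subtype.ext
  exact Prod.ext (g.injective hv.1) (g.injective hv.2)

lemma sc_adj_consec' (e : EdgeIdx m) {k k' : ℕ} (hk : k' = k + 1) (h' : k' < r) (h : k < r) :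
    (subClique m r).Adj (.inr (e, ⟨k, h⟩)) (.inr (e, ⟨k', h'⟩)) := by
  subst hk; exact sc_adj_consec e h'

lemma sc_adj_inl_last' (e : EdgeIdx m) {n : ℕ} (hn : n = r - 1) (h : n < r) :
    (subClique m r).Adj (.inl e.val.2) (.inr (e, ⟨n, h⟩)) := by
  subst hn; exact sc_adj_inl_last e (by omega)

lemma main_construct (hr : 0 < r) (hrs : r = 2 * s' + 1)
    (f : subClique m r →g Gprime G) (hf : Function.Injective f)
    (g : Fin M ↪o Fin m)
    (A : Fin M → α) (hA : ∀ i, f (.inl (g i)) = .inl (A i))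
    (hgood : ∀ i : Fin M, ∀ E : EdgeIdx m, E.val.1 = g i →
      ∀ k : Fin r, ∀ t, f (.inr (E, k)) ≠ .inr (.inr t)) :
    SubgraphOf (subClique M s') G := by
  have hpar : ∀ E : EdgeIdx M, ∀ n, ∀ h : n < r,
      (n % 2 = 0 → ∃ ε, f (.inr (liftEdge g E, ⟨n, h⟩)) = .inr (.inl ε)) ∧
      (n % 2 = 1 → ∃ c, f (.inr (liftEdge g E, ⟨n, h⟩)) = .inl c) := by
    intro E
    exact parity f (liftEdge g E) hr
      (fun k t => hgood E.val.1 (liftEdge g E) rfl k t) (hA E.val.1)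
  have hintC : ∀ E : EdgeIdx M, ∀ κ : Fin s',
      ∃ c, f (.inr (liftEdge g E, ⟨2 * κ.val + 1, by omega⟩)) = .inl c := by
    intro E κ
    have hκ := κ.isLt
    exact (hpar E (2 * κ.val + 1) (by omega)).2 (by omega)
  choose Cm hCm using hintC
  set F : (Fin M ⊕ EdgeIdx M × Fin s') → α := Sum.elim A (fun p => Cm p.1 p.2) with hF
  -- injectivity of F
  have hFinj : Function.Injective F := by
    rintro (i | ⟨E, κ⟩) (i' | ⟨E', κ'⟩) h
    · have : f (.inl (g i)) = f (.inl (g i')) := by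
        rw [hA i, hA i']; exact congrArg Sum.inl h
      have := hf this
      simp only [Sum.inl.injEq] at this ⊢
      exact g.injective this
    · exfalso
      have : f (.inl (g i)) = f (.inr (liftEdge g E', ⟨2 * κ'.val + 1, by omega⟩)) := by
        rw [hA i, hCm E' κ']; exact congrArg Sum.inl h
      exact absurd (hf this) (by simp)
    · exfalso
      have : f (.inl (g i')) = f (.inr (liftEdge g E, ⟨2 * κ.val + 1, by omega⟩)) := by
        rw [hA i', hCm E κ]; exact congrArg Sum.inl h.symm
      exact absurd (hf this) (by simp)
    · have : f (.inr (liftEdge g E, ⟨2 * κ.val + 1, by omega⟩)) =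
          f (.inr (liftEdge g E', ⟨2 * κ'.val + 1, by omega⟩)) := by
        rw [hCm E κ, hCm E' κ']; exact congrArg Sum.inl h
      have h2 := hf this
      simp only [Sum.inr.injEq, Prod.mk.injEq, Fin.mk.injEq] at h2
      obtain ⟨hEe, hκe⟩ := h2
      have : E = E' := liftEdge_inj g hEe
      subst this
      have : κ = κ' := Fin.ext (by omega)
      subst this
      rfl
  -- the hom property, one-sided relation version
  have aux : ∀ x y, subCliqueRel M s' x y → x ≠ y → G.Adj (F x) (F y) := by
    have claim : s' = 0 → ∀ i i' : Fin M, i < i' → G.Adj (A i) (A i') := by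
      intro hs0 i i' hlt
      have hr1 : r = 1 := by omega
      obtain ⟨ε, hε⟩ := (hpar ⟨(i, i'), hlt⟩ 0 hr).1 (by omega)
      refine build_adj f hf (hA i) (hA i') hε ?_ ?_ ?_
      · exact sc_adj_inl_first (liftEdge g ⟨(i, i'), hlt⟩) hr
      · exact sc_adj_inl_last' (liftEdge g ⟨(i, i'), hlt⟩) (by omega) hr
      · simp only [ne_eq, Sum.inl.injEq]
        exact fun h => absurd (g.injective h) (ne_of_lt hlt)
    rintro (i | ⟨E, κ⟩) (i' | ⟨E', κ'⟩) hrel hne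
    · -- branch-branch, s' = 0
      have hs0 : s' = 0 := hrel
      have hii : i ≠ i' := by simpa using hne
      rcases hii.lt_or_gt with h | h
      · exact claim hs0 i i' h
      · exact (claim hs0 i' i h).symm
    · -- branch-interior
      have hκs := κ'.isLt
      simp only [subCliqueRel] at hrel
      rcases hrel with ⟨hκ, hE⟩ | ⟨hκ, hE⟩
      · -- κ' = 0, E'.val.1 = i
        subst hE
        obtain ⟨ε, hε⟩ := (hpar E' 0 hr).1 (by omega)
        refine build_adj f hf (hA E'.val.1) (hCm E' κ') hε ?_ ?_ ?_
        · exact sc_adj_inl_first (liftEdge g E') hr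
        · exact (sc_adj_consec' (liftEdge g E') (by omega) (by omega) hr).symm
        · simp
      · -- κ' = s' - 1, E'.val.2 = i
        subst hE
        obtain ⟨ε, hε⟩ := (hpar E' (r - 1) (by omega)).1 (by omega)
        refine build_adj f hf (hA E'.val.2) (hCm E' κ') hε ?_ ?_ ?_
        · exact sc_adj_inl_last' (liftEdge g E') rfl (by omega)
        · exact sc_adj_consec' (liftEdge g E') (by omega) (by omega) (by omega)
        · simp
    · exact absurd hrel (by simp [subCliqueRel])
    · -- interior-interior
      have hκs := κ.isLt
      have hκs' := κ'.isLt
      simp only [subCliqueRel] at hrel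
      obtain ⟨hEE, hκκ⟩ := hrel
      subst hEE
      obtain ⟨ε, hε⟩ := (hpar E (2 * κ.val + 2) (by omega)).1 (by omega)
      refine build_adj f hf (hCm E κ) (hCm E κ') hε ?_ ?_ ?_
      · exact sc_adj_consec' (liftEdge g E) (by omega) (by omega) (by omega)
      · exact (sc_adj_consec' (liftEdge g E) (by omega) (by omega) (by omega)).symm
      · simp only [ne_eq, Sum.inr.injEq, Prod.mk.injEq, Fin.mk.injEq, not_and]
        intro _ h
        omega
  refine ⟨⟨F, ?_⟩, hFinj⟩
  intro x y hxy
  obtain ⟨hne, hrel | hrel⟩ := hxy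
  · exact aux x y hrel hne
  · exact (aux y x hrel (Ne.symm hne)).symm

end Construct

/-- If `C` is superflat, then so is the class `C' = {G' : G ∈ C}` obtained by the
diameter-reduction construction. -/
theorem superflat_Gprime (C : Set VGraph) (hC : Superflat C) :
    Superflat {H : VGraph | ∃ G ∈ C, Nonempty (H.2 ≃g Gprime G.2)} := by
  intro r
  obtain ⟨M, hM⟩ := hC (r / 2)
  refine ⟨M + 5, ?_⟩
  rintro H ⟨G, hG, ⟨iso⟩⟩ ⟨f₀, hf₀⟩
  let f : subClique (M + 5) r →g Gprime G.2 := iso.toHom.comp f₀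
  have hf : Function.Injective f := fun x y h => hf₀ (iso.injective h)
  apply hM G hG
  rcases Nat.eq_zero_or_pos r with rfl | hr
  · exfalso
    have adj : ∀ i j : Fin (M + 5), i ≠ j → (Gprime G.2).Adj (f (.inl i)) (f (.inl j)) :=
      fun i j h => f.map_adj (sc_adj_inl_inl rfl h)
    exact noK4
      (adj ⟨0, by omega⟩ ⟨1, by omega⟩ (by simp [Fin.ext_iff]))
      (adj ⟨0, by omega⟩ ⟨2, by omega⟩ (by simp [Fin.ext_iff]))
      (adj ⟨0, by omega⟩ ⟨3, by omega⟩ (by simp [Fin.ext_iff]))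
      (adj ⟨1, by omega⟩ ⟨2, by omega⟩ (by simp [Fin.ext_iff]))
      (adj ⟨1, by omega⟩ ⟨3, by omega⟩ (by simp [Fin.ext_iff]))
      (adj ⟨2, by omega⟩ ⟨3, by omega⟩ (by simp [Fin.ext_iff]))
  · classical
    set isBad : Fin (M + 5) → Prop := fun i =>
      (∃ t, f (.inl i) = .inr (.inr t)) ∨
      ∃ e : EdgeIdx (M + 5), ∃ k : Fin r, ∃ t, e.val.1 = i ∧
        f (.inr (e, k)) = .inr (.inr t) with hisBad
    set B : Finset (Fin (M + 5)) := Finset.univ.filter isBad with hB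
    set idxOf : (Fin (M + 5) ⊕ EdgeIdx (M + 5) × Fin r) → Fin (M + 5) :=
      Sum.elim id (fun p => p.1.val.1) with hidxOf
    have key : ∀ i : Fin (M + 5), ∃ w t,
        isBad i → (f w = .inr (.inr t) ∧ idxOf w = i) := by
      intro i
      by_cases h : isBad i
      · rcases h with ⟨t, ht⟩ | ⟨e, k, t, he, ht⟩
        · exact ⟨.inl i, t, fun _ => ⟨ht, rfl⟩⟩
        · exact ⟨.inr (e, k), t, fun _ => ⟨ht, he⟩⟩
      · exact ⟨.inl i, 0, fun hb => absurd hb h⟩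
    choose w T hk using key
    have hBcard : B.card ≤ 3 := by
      have h1 : B.card ≤ (Finset.univ : Finset (Fin 3)).card := by
        apply Finset.card_le_card_of_injOn T (fun _ _ => Finset.mem_univ _)
        intro i hi j hj hT
        have hbi : isBad i := (Finset.mem_filter.mp hi).2
        have hbj : isBad j := (Finset.mem_filter.mp hj).2
        obtain ⟨hfi, hii⟩ := hk i hbi
        obtain ⟨hfj, hjj⟩ := hk j hbj
        have hww : w i = w j := hf (by rw [hfi, hfj, hT])
        rw [← hii, ← hjj, hww]
      simpa using h1
    have hcompl : M + 2 ≤ Bᶜ.card := by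
      have h1 : Bᶜ.card = Fintype.card (Fin (M + 5)) - B.card := Finset.card_compl B
      rw [Fintype.card_fin] at h1
      omega
    have hgood : ∀ i ∈ Bᶜ, ¬ isBad i := by
      intro i hi
      simp only [hB, Finset.mem_compl, Finset.mem_filter, Finset.mem_univ, true_and] at hi
      exact hi
    have hbranch : ∀ i, ¬ isBad i → ∃ a, f (.inl i) = .inl a := by
      intro i hbi
      rcases branch_image (by omega) f hf i with h | h
      · exact h
      · exact absurd (Or.inl ⟨0, h⟩) hbi
    have hint : ∀ i, ¬ isBad i → ∀ E : EdgeIdx (M + 5), E.val.1 = i →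
        ∀ k : Fin r, ∀ t, f (.inr (E, k)) ≠ .inr (.inr t) := by
      intro i hbi E hE k t ht
      exact hbi (Or.inr ⟨E, k, t, hE, ht⟩)
    -- r is odd
    have hodd : r % 2 = 1 := by
      have h2 : 2 ≤ Bᶜ.card := by omega
      set g2 := Bᶜ.orderEmbOfCardLe h2 with hg2
      have hlt : g2 0 < g2 1 := g2.strictMono (by decide)
      have hb0 : ¬ isBad (g2 0) := hgood _ (Finset.orderEmbOfCardLe_mem _ h2 0)
      have hb1 : ¬ isBad (g2 1) := hgood _ (Finset.orderEmbOfCardLe_mem _ h2 1)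
      obtain ⟨a, ha⟩ := hbranch _ hb0
      obtain ⟨b, hb⟩ := hbranch _ hb1
      exact r_odd f ⟨(g2 0, g2 1), hlt⟩ hr (hint _ hb0 _ rfl) ha hb
    -- main construction
    have hMle : M ≤ Bᶜ.card := by omega
    set g := Bᶜ.orderEmbOfCardLe hMle with hg
    have hgB : ∀ i, ¬ isBad (g i) := fun i =>
      hgood _ (Finset.orderEmbOfCardLe_mem _ hMle i)
    have hA' : ∀ i : Fin M, ∃ a, f (.inl (g i)) = .inl a := fun i => hbranch _ (hgB i)
    choose A hA using hA'
    exact main_construct hr (by omega) f hf g A hA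
      (fun i E hE k t => hint _ (hgB i) E hE k t)
end
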